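/- Suppose 0 < ε < 1 and ψ ∈ ℝ^N satisfies G^ε_i(ψ) = α_i for every i (equivalently, ψ maximizes K^ε). Then r² ≤ ψ_i ≤ R² for every i ∈ {1,…,N}, where r = α_min/(2ρ_max) and R = (1 + diam(spt ρ ∪ {y_1,…,y_N})²)^{1/2}. -/

import Mathlib

open MeasureTheory Real Filter Set

noncomputable section

/-- The (unrestricted) one-dimensional Laguerre cell of index `i`. -/
def Lag1 {N : ℕ} (y ψ : Fin N → ℝ) (i : Fin N) : Set ℝ :=
  {x : ℝ | ∀ j, (x - y i) ^ 2 - ψ i ≤ (x - y j) ^ 2 - ψ j}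

/-- The regularized mass of the `i`-th Laguerre cell,
`G^ε_i(ψ) = ∫_{Lag_i(ψ)} min(√(max(ψ_i − (x−y_i)², 0))/ε, 1) ρ(x) dx`. -/
def Greg {N : ℕ} (y : Fin N → ℝ) (f : ℝ → ℝ) (ε : ℝ) (ψ : Fin N → ℝ) (i : Fin N) : ℝ :=
  ∫ x in Lag1 y ψ i, min (Real.sqrt (max (ψ i - (x - y i) ^ 2) 0) / ε) 1 * f x

lemma lag1_measurable {N : ℕ} (y ψ : Fin N → ℝ) (i : Fin N) :
    MeasurableSet (Lag1 y ψ i) := by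
  have h : Lag1 y ψ i = ⋂ j, {x : ℝ | (x - y i) ^ 2 - ψ i ≤ (x - y j) ^ 2 - ψ j} := by
    ext x; simp [Lag1]
  rw [h]
  exact MeasurableSet.iInter fun j => measurableSet_le (by fun_prop) (by fun_prop)

lemma lag1_mem {N : ℕ} (hN : 0 < N) (y ψ : Fin N → ℝ) (x : ℝ) :
    ∃ j, x ∈ Lag1 y ψ j := by
  haveI : Nonempty (Fin N) := ⟨⟨0, hN⟩⟩
  obtain ⟨j, _, hj⟩ := Finset.exists_min_image Finset.univ
    (fun j => (x - y j) ^ 2 - ψ j) ⟨Classical.arbitrary _, Finset.mem_univ _⟩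
  exact ⟨j, fun k => hj k (Finset.mem_univ k)⟩

/-- if `0 < ε < 1` and `ψ` satisfies the optimality conditions
`G^ε_i(ψ) = α_i`, then `r² ≤ ψ_i ≤ R²` for every `i`, with
`r = α_min/(2ρ_max)` and `R = √(1 + diam(spt ρ ∪ {y_1,…,y_N})²)`. -/
theorem stmt11 {N : ℕ} (hN : 0 < N) (c e ρmin ρmax : ℝ) (hce : c < e)
    (f : ℝ → ℝ) (hfm : Measurable f) (hf0 : ∀ x, 0 ≤ f x)
    (hsupp : ∀ x, x ∉ Set.Icc c e → f x = 0)
    (hcont : ContinuousOn f (Set.Icc c e))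
    (hρmin : 0 < ρmin) (hρ : ρmin ≤ ρmax)
    (hbd : ∀ x ∈ Set.Icc c e, ρmin ≤ f x ∧ f x ≤ ρmax)
    (hint : ∫ x, f x = 1)
    (y : Fin N → ℝ) (hy : StrictMono y)
    (α : Fin N → ℝ) (hα : ∀ i, 0 < α i) (hαs : ∑ i, α i < 1)
    (ε : ℝ) (hε : 0 < ε) (hε1 : ε < 1)
    (ψ : Fin N → ℝ) (hopt : ∀ i, Greg y f ε ψ i = α i) :
    ∀ i, ((⨅ j, α j) / (2 * ρmax)) ^ 2 ≤ ψ i ∧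
      ψ i ≤ (Real.sqrt (1 + (Metric.diam (Set.Icc c e ∪ Set.range y)) ^ 2)) ^ 2 := by
  haveI : Nonempty (Fin N) := ⟨⟨0, hN⟩⟩
  have hρmax : (0:ℝ) < ρmax := lt_of_lt_of_le hρmin hρ
  set D := Metric.diam (Set.Icc c e ∪ Set.range y) with hD
  have hD0 : 0 ≤ D := Metric.diam_nonneg
  have hRsq : (Real.sqrt (1 + D ^ 2)) ^ 2 = 1 + D ^ 2 := Real.sq_sqrt (by positivity)
  -- integrability of f
  have hbound : Integrable ((Set.Icc c e).indicator (fun _ => ρmax)) := by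
    rw [integrable_indicator_iff measurableSet_Icc]
    exact integrableOn_const measure_Icc_lt_top.ne
  have hfle : ∀ x, f x ≤ (Set.Icc c e).indicator (fun _ => ρmax) x := by
    intro x
    by_cases hx : x ∈ Set.Icc c e
    · simpa [Set.indicator_of_mem hx] using (hbd x hx).2
    · simp [Set.indicator_of_notMem hx, hsupp x hx]
  have hfint : Integrable f := by
    refine hbound.mono' hfm.aestronglyMeasurable (ae_of_all _ fun x => ?_)
    rw [Real.norm_eq_abs, abs_of_nonneg (hf0 x)]
    exact hfle x
  -- the distance bound
  have hdistD : ∀ x ∈ Set.Icc c e, ∀ j, (x - y j) ^ 2 ≤ D ^ 2 := by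
    intro x hx j
    have hb : Bornology.IsBounded (Set.Icc c e ∪ Set.range y) :=
      Metric.isBounded_Icc c e |>.union (Set.Finite.isBounded (Set.finite_range y))
    have hd : dist x (y j) ≤ D :=
      Metric.dist_le_diam_of_mem hb (Or.inl hx) (Or.inr ⟨j, rfl⟩)
    have : |x - y j| ≤ D := by rwa [Real.dist_eq] at hd
    nlinarith [abs_nonneg (x - y j), sq_abs (x - y j)]
  -- UPPER BOUND
  have hub : ∀ i, ψ i ≤ 1 + D ^ 2 := by
    by_contra h
    push_neg at h
    obtain ⟨i0, hi0⟩ := h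
    obtain ⟨k, _, hk⟩ := Finset.exists_max_image Finset.univ ψ ⟨i0, Finset.mem_univ i0⟩
    have hkψ : 1 + D ^ 2 < ψ k := lt_of_lt_of_le hi0 (hk i0 (Finset.mem_univ i0))
    have key : ∀ j, (∫ x in Lag1 y ψ j, f x) = α j := by
      intro j
      rw [← hopt j]
      refine (setIntegral_congr_fun (lag1_measurable y ψ j) (fun x hx => ?_)).symm
      by_cases hxc : x ∈ Set.Icc c e
      · have h1 : 1 < ψ j - (x - y j) ^ 2 := by
          have h2 := hx k
          have h3 := hdistD x hxc k
          nlinarith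
        have hmax : max (ψ j - (x - y j) ^ 2) 0 = ψ j - (x - y j) ^ 2 :=
          max_eq_left (by linarith)
        have hsq : 1 < Real.sqrt (ψ j - (x - y j) ^ 2) := by
          rw [show (1:ℝ) = Real.sqrt 1 by simp]
          exact Real.sqrt_lt_sqrt (by norm_num) h1
        have : (1:ℝ) ≤ Real.sqrt (ψ j - (x - y j) ^ 2) / ε := by
          rw [le_div_iff₀ hε]; nlinarith
        rw [hmax, min_eq_right this, one_mul]
      · simp [hsupp x hxc]
    have hge : (1:ℝ) ≤ ∑ j, α j := by
      have hcov : ∀ x, f x ≤ ∑ j, (Lag1 y ψ j).indicator f x := by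
        intro x
        obtain ⟨j, hj⟩ := lag1_mem hN y ψ x
        calc f x = (Lag1 y ψ j).indicator f x := (Set.indicator_of_mem hj f).symm
        _ ≤ ∑ j, (Lag1 y ψ j).indicator f x :=
            Finset.single_le_sum (f := fun j => (Lag1 y ψ j).indicator f x)
              (fun j _ => Set.indicator_apply_nonneg fun _ => hf0 x) (Finset.mem_univ j)
      have hind : ∀ j : Fin N, Integrable ((Lag1 y ψ j).indicator f) :=
        fun j => hfint.indicator (lag1_measurable y ψ j)
      calc (1:ℝ) = ∫ x, f x := hint.symm
      _ ≤ ∫ x, ∑ j, (Lag1 y ψ j).indicator f x :=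
          integral_mono hfint (integrable_finset_sum _ fun j _ => hind j) hcov
      _ = ∑ j, ∫ x, (Lag1 y ψ j).indicator f x := integral_finset_sum _ fun j _ => hind j
      _ = ∑ j, ∫ x in Lag1 y ψ j, f x := by
          refine Finset.sum_congr rfl fun j _ => ?_
          rw [integral_indicator (lag1_measurable y ψ j)]
      _ = ∑ j, α j := by simp only [key]
    linarith
  -- LOWER BOUND
  intro i
  refine ⟨?_, by rw [hRsq]; exact hub i⟩
  set s := Real.sqrt (max (ψ i) 0) with hs
  have hs0 : 0 ≤ s := Real.sqrt_nonneg _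
  have hssq : s ^ 2 = max (ψ i) 0 := Real.sq_sqrt (le_max_right _ _)
  set g : ℝ → ℝ := fun x => min (Real.sqrt (max (ψ i - (x - y i) ^ 2) 0) / ε) 1 * f x with hg
  set h : ℝ → ℝ := (Set.Icc (y i - s) (y i + s)).indicator (fun _ => ρmax) with hh
  have hgh : ∀ x, g x ≤ h x := by
    intro x
    have hh0 : 0 ≤ h x := Set.indicator_apply_nonneg fun _ => hρmax.le
    by_cases hm : max (ψ i - (x - y i) ^ 2) 0 = 0
    · simp [hg, hm, le_of_lt hε, hh0]
    · have hpos : 0 < ψ i - (x - y i) ^ 2 := by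
        rcases lt_or_ge 0 (ψ i - (x - y i) ^ 2) with h2 | h2
        · exact h2
        · exact absurd (max_eq_right h2) hm
      have hxmem : x ∈ Set.Icc (y i - s) (y i + s) := by
        have h2 : (x - y i) ^ 2 < max (ψ i) 0 := lt_of_lt_of_le (by linarith) (le_max_left _ _)
        rw [← hssq] at h2
        have h3 : |x - y i| ≤ s := by nlinarith [abs_nonneg (x - y i), sq_abs (x - y i)]
        rw [abs_le] at h3
        constructor <;> linarith [h3.1, h3.2]
      have : h x = ρmax := by rw [hh, Set.indicator_of_mem hxmem]
      rw [this]
      calc g x ≤ 1 * f x := by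
            apply mul_le_mul_of_nonneg_right (min_le_right _ _) (hf0 x)
      _ = f x := one_mul _
      _ ≤ ρmax := by
          by_cases hx : x ∈ Set.Icc c e
          · exact (hbd x hx).2
          · rw [hsupp x hx]; exact hρmax.le
  have hhint : Integrable h := by
    rw [hh, integrable_indicator_iff measurableSet_Icc]
    exact integrableOn_const measure_Icc_lt_top.ne
  have hg0 : ∀ x, 0 ≤ g x := by
    intro x
    apply mul_nonneg _ (hf0 x)
    exact le_min (div_nonneg (Real.sqrt_nonneg _) hε.le) zero_le_one
  have hgm : Measurable g := by
    apply Measurable.mul _ hfm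
    fun_prop
  have hgint : Integrable g := by
    refine hhint.mono' hgm.aestronglyMeasurable (ae_of_all _ fun x => ?_)
    rw [Real.norm_eq_abs, abs_of_nonneg (hg0 x)]
    exact hgh x
  have hαi : α i ≤ ρmax * (2 * s) := by
    calc α i = ∫ x in Lag1 y ψ i, g x := (hopt i).symm
    _ ≤ ∫ x in Lag1 y ψ i, h x :=
        setIntegral_mono_on hgint.integrableOn hhint.integrableOn
          (lag1_measurable y ψ i) (fun x _ => hgh x)
    _ ≤ ∫ x, h x := setIntegral_le_integral hhint (ae_of_all _ fun x =>
        Set.indicator_apply_nonneg fun _ => hρmax.le)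
    _ = ρmax * (2 * s) := by
        rw [hh, integral_indicator_const _ measurableSet_Icc]
        simp only [smul_eq_mul]
        rw [measureReal_def, Real.volume_Icc]
        rw [ENNReal.toReal_ofReal (by linarith)]
        ring
  -- infimum facts
  obtain ⟨j0, _, hj0⟩ := Finset.exists_min_image Finset.univ α ⟨i, Finset.mem_univ i⟩
  have hinf_eq : (⨅ j, α j) = α j0 :=
    le_antisymm (ciInf_le (Set.Finite.bddBelow (Set.finite_range α)) j0)
      (le_ciInf fun j => hj0 j (Finset.mem_univ j))
  have hinf_pos : 0 < ⨅ j, α j := hinf_eq ▸ hα j0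
  have hinf_le : (⨅ j, α j) ≤ α i := hinf_eq ▸ hj0 i (Finset.mem_univ i)
  have hrs : (⨅ j, α j) / (2 * ρmax) ≤ s := by
    rw [div_le_iff₀ (by positivity)]
    nlinarith
  have hr2 : ((⨅ j, α j) / (2 * ρmax)) ^ 2 ≤ max (ψ i) 0 := by
    rw [← hssq]
    exact pow_le_pow_left₀ (by positivity) hrs 2
  rcases le_max_iff.1 hr2 with h1 | h1
  · exact h1
  · exfalso
    have : 0 < ((⨅ j, α j) / (2 * ρmax)) ^ 2 := by positivity
    linarith
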